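/- For θ ∈ [0, 2π], let u_θ = (cos θ, sin θ) ∈ ℝ² (with the Euclidean norm) and let P_θ : ℝ² → ℝ² be the orthogonal projection onto the span of u_θ, P_θ(v) = ⟨v, u_θ⟩ u_θ. Then: (1) the map T sending v ∈ ℝ² to the continuous function θ ↦ P_θ(v) on the compact interval [0, 2π] is a linear map from ℝ² into C([0,2π], ℝ²) satisfying sup_{θ∈[0,2π]} ‖P_θ(v)‖ = ‖v‖ for every v ∈ ℝ², i.e., T is a linear isometry into C([0,2π], ℝ²); and (2) for every θ ∈ [0,2π], the map P_θ is not an isometry (indeed P_θ annihilates the nonzero vector (−sin θ, cos θ)). -/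

import Mathlib

open Real

/-- The unit vector `u_θ = (cos θ, sin θ)` in the Euclidean plane. -/
noncomputable def unitVec (θ : ℝ) : EuclideanSpace ℝ (Fin 2) :=
  (WithLp.equiv 2 (Fin 2 → ℝ)).symm ![Real.cos θ, Real.sin θ]

/-- The orthogonal projection `P_θ` of the Euclidean plane onto the span of `u_θ`. -/
noncomputable def proj (θ : ℝ) (v : EuclideanSpace ℝ (Fin 2)) : EuclideanSpace ℝ (Fin 2) :=
  (inner ℝ v (unitVec θ) : ℝ) • unitVec θ

lemma inner_unitVec (θ : ℝ) (v : EuclideanSpace ℝ (Fin 2)) :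
    (inner ℝ v (unitVec θ) : ℝ) = v 0 * Real.cos θ + v 1 * Real.sin θ := by
  simp [unitVec, PiLp.inner_apply, Fin.sum_univ_two, WithLp.equiv_symm_apply, PiLp.toLp_apply]
  ring

lemma norm_unitVec (θ : ℝ) : ‖unitVec θ‖ = 1 := by
  simp [unitVec, EuclideanSpace.norm_eq, Fin.sum_univ_two, WithLp.equiv_symm_apply, PiLp.toLp_apply, sq_abs,
    Real.cos_sq_add_sin_sq]

lemma continuous_unitVec : Continuous unitVec := by
  unfold unitVec
  exact (PiLp.continuous_toLp 2 (fun _ : Fin 2 => ℝ)).comp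
    (continuous_pi fun i => by fin_cases i <;> simp <;> continuity)

lemma norm_proj (θ : ℝ) (v : EuclideanSpace ℝ (Fin 2)) :
    ‖proj θ v‖ = |(inner ℝ v (unitVec θ) : ℝ)| := by
  rw [proj, norm_smul, norm_unitVec, mul_one, Real.norm_eq_abs]

lemma norm_proj_le (θ : ℝ) (v : EuclideanSpace ℝ (Fin 2)) : ‖proj θ v‖ ≤ ‖v‖ := by
  rw [norm_proj]
  calc |(inner ℝ v (unitVec θ) : ℝ)| ≤ ‖v‖ * ‖unitVec θ‖ := abs_real_inner_le_norm v (unitVec θ)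
    _ = ‖v‖ := by rw [norm_unitVec, mul_one]

lemma exists_max (v : EuclideanSpace ℝ (Fin 2)) :
    ∃ θ ∈ Set.Icc (0:ℝ) (2*Real.pi), ‖proj θ v‖ = ‖v‖ := by
  by_cases hv : v = 0
  · exact ⟨0, ⟨le_refl 0, by positivity⟩, by simp [hv, proj]⟩
  · set z : ℂ := ⟨v 0, v 1⟩ with hz
    have hznorm : ‖z‖ = ‖v‖ := by
      rw [Complex.norm_def, Complex.normSq_mk, EuclideanSpace.norm_eq]
      simp [Fin.sum_univ_two, sq_abs]
      ring_nf
    have hz0 : z ≠ 0 := by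
      intro h
      apply hv
      have := hznorm
      rw [h] at this
      simp at this
      exact (norm_eq_zero.mp this.symm)
    have hcos := Complex.cos_arg hz0
    have hsin := Complex.sin_arg z
    have key : ∀ θ, Real.cos θ = Real.cos z.arg → Real.sin θ = Real.sin z.arg →
        ‖proj θ v‖ = ‖v‖ := by
      intro θ hc hs
      rw [norm_proj, inner_unitVec, hc, hs, hcos, hsin, hz]
      simp only [Complex.ofReal_re, Complex.ofReal_im]
      have hr : (0:ℝ) < ‖z‖ := by
        rw [hznorm]; exact norm_pos_iff.mpr hv
      have hsq : v 0 * v 0 + v 1 * v 1 = (‖z‖)^2 := by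
        rw [Complex.sq_norm, Complex.normSq_mk]
      have hexp : v 0 * (v 0 / ‖z‖) + v 1 * (v 1 / ‖z‖)
          = ‖z‖ := by
        field_simp
        rw [← hsq]; ring
      rw [hexp, abs_of_nonneg (norm_nonneg _), hznorm]
    have harg := Complex.arg_mem_Ioc z
    by_cases h : 0 ≤ z.arg
    · refine ⟨z.arg, ⟨h, le_trans harg.2 (by linarith [Real.pi_pos])⟩, key _ rfl rfl⟩
    · refine ⟨z.arg + 2*Real.pi, ⟨by linarith [harg.1, Real.pi_pos], by linarith [harg.2]⟩,
        key _ (by rw [Real.cos_add_two_pi]) (by rw [Real.sin_add_two_pi])⟩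

lemma sup_norm_proj (v : EuclideanSpace ℝ (Fin 2)) :
    (⨆ θ : Set.Icc (0 : ℝ) (2 * Real.pi), ‖proj (θ : ℝ) v‖) = ‖v‖ := by
  have hne : Nonempty (Set.Icc (0:ℝ) (2*Real.pi)) :=
    ⟨⟨0, le_refl 0, by positivity⟩⟩
  obtain ⟨θ₀, hθ₀, hmax⟩ := exists_max v
  apply le_antisymm
  · exact ciSup_le fun θ => norm_proj_le _ v
  · rw [← hmax]
    have hb : BddAbove (Set.range fun θ : Set.Icc (0:ℝ) (2*Real.pi) => ‖proj (θ:ℝ) v‖) :=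
      ⟨‖v‖, by rintro x ⟨θ, rfl⟩; exact norm_proj_le _ v⟩
    exact le_ciSup hb ⟨θ₀, hθ₀⟩

lemma continuous_projfun (v : EuclideanSpace ℝ (Fin 2)) :
    Continuous fun θ : Set.Icc (0:ℝ) (2*Real.pi) => proj (θ:ℝ) v := by
  unfold proj
  have hu : Continuous fun θ : Set.Icc (0:ℝ) (2*Real.pi) => unitVec (θ:ℝ) :=
    continuous_unitVec.comp continuous_subtype_val
  exact (Continuous.inner (𝕜 := ℝ) continuous_const hu).smul hu

noncomputable def Tmap : EuclideanSpace ℝ (Fin 2) →ₗ[ℝ]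
    C(Set.Icc (0 : ℝ) (2 * Real.pi), EuclideanSpace ℝ (Fin 2)) where
  toFun v := ⟨fun θ => proj (θ:ℝ) v, continuous_projfun v⟩
  map_add' v w := by
    ext θ
    simp [proj, inner_add_left, add_smul]
  map_smul' c v := by
    ext θ
    simp [proj, inner_smul_left, smul_smul, mul_assoc]


/-- Example 3.2: `v ↦ (θ ↦ P_θ v)` is a linear isometry from the Euclidean plane into
`C([0, 2π], ℝ²)` (in particular `sup_θ ‖P_θ v‖ = ‖v‖`), yet no single `P_θ` is an
isometry, since `P_θ` annihilates the nonzero vector `(-sin θ, cos θ)`. -/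
theorem projection_field_into_isometry :
    (∃ T : EuclideanSpace ℝ (Fin 2) →ₗᵢ[ℝ]
        C(Set.Icc (0 : ℝ) (2 * Real.pi), EuclideanSpace ℝ (Fin 2)),
      ∀ (v : EuclideanSpace ℝ (Fin 2)) (θ : Set.Icc (0 : ℝ) (2 * Real.pi)),
        T v θ = proj (θ : ℝ) v) ∧
    (∀ v : EuclideanSpace ℝ (Fin 2),
      (⨆ θ : Set.Icc (0 : ℝ) (2 * Real.pi), ‖proj (θ : ℝ) v‖) = ‖v‖) ∧
    (∀ θ : Set.Icc (0 : ℝ) (2 * Real.pi),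
      ((WithLp.equiv 2 (Fin 2 → ℝ)).symm ![-Real.sin (θ : ℝ), Real.cos (θ : ℝ)] ≠ 0 ∧
        proj (θ : ℝ) ((WithLp.equiv 2 (Fin 2 → ℝ)).symm
          ![-Real.sin (θ : ℝ), Real.cos (θ : ℝ)]) = 0) ∧
      ¬ ∀ v : EuclideanSpace ℝ (Fin 2), ‖proj (θ : ℝ) v‖ = ‖v‖) := by
  refine ⟨⟨⟨Tmap, ?_⟩, fun v θ => rfl⟩, sup_norm_proj, fun θ => ?_⟩
  · intro v
    rw [ContinuousMap.norm_eq_iSup_norm]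
    exact sup_norm_proj v
  · set w : EuclideanSpace ℝ (Fin 2) :=
      (WithLp.equiv 2 (Fin 2 → ℝ)).symm ![-Real.sin (θ : ℝ), Real.cos (θ : ℝ)] with hw
    have hw0 : w ≠ 0 := by
      intro h
      have h0 : w 0 = 0 := by rw [h]; rfl
      have h1 : w 1 = 0 := by rw [h]; rfl
      rw [hw] at h0 h1
      simp [WithLp.equiv_symm_apply, PiLp.toLp_apply] at h0 h1
      have := Real.sin_sq_add_cos_sq (θ:ℝ)
      rw [h0, h1] at this
      norm_num at this
    have hproj : proj (θ : ℝ) w = 0 := by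
      rw [proj, inner_unitVec]
      have : w 0 * Real.cos (θ:ℝ) + w 1 * Real.sin (θ:ℝ) = 0 := by
        rw [hw]
        simp [WithLp.equiv_symm_apply, PiLp.toLp_apply]
        ring
      rw [this, zero_smul]
    refine ⟨⟨hw0, hproj⟩, fun h => ?_⟩
    have := h w
    rw [hproj] at this
    simp at this
    exact hw0 (norm_eq_zero.mp this.symm)
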